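/- Let τ_G(x) = e^{-x} and let ν_Λ be the Gumbel law with density Λ'(x) = e^{-x}exp(-e^{-x}). Then for every C^1 function f with compact support, ∫_ℝ [ -f'(x) + ∫_0^∞ f'(x+y)e^{-(x+y)} dy ] ν_Λ(dx) = 0; i.e. the generator A f(x) = -f'(x) + ∫_0^∞ f'(x+y)τ_G(x+y)dy satisfies ∫ A f dν_Λ = 0 (ν_Λ is an invariant measure for A). -/

import Mathlib

open Filter Topology MeasureTheory Set

/-- The Gumbel law `ν_Λ` (density `e^{-x} exp(-e^{-x})`) is invariant for the
generator `A f(x) = -f'(x) + ∫_0^∞ f'(x+y) e^{-(x+y)} dy`: for every `C¹`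
function `f` with compact support, `∫ A f dν_Λ = 0`. -/
theorem gumbel_invariant_generator
    (f : ℝ → ℝ) (hf : ContDiff ℝ 1 f) (hsupp : HasCompactSupport f) :
    ∫ x, (-(deriv f x) + ∫ y in Ioi (0 : ℝ), deriv f (x + y) * Real.exp (-(x + y)))
        ∂(volume.withDensity
          (fun x : ℝ => ENNReal.ofReal (Real.exp (-x) * Real.exp (-Real.exp (-x)))))
      = 0 := by
  set Λ : ℝ → ℝ := fun x => Real.exp (-Real.exp (-x)) with hΛdef
  set ρ : ℝ → ℝ := fun x => Real.exp (-x) * Real.exp (-Real.exp (-x)) with hρdef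
  set g : ℝ → ℝ := fun u => deriv f u * Real.exp (-u) with hgdef
  have hf'c : Continuous (deriv f) := hf.continuous_deriv le_rfl
  have hexpneg : Continuous fun x : ℝ => Real.exp (-x) :=
    Real.continuous_exp.comp continuous_neg
  have hΛc : Continuous Λ := Real.continuous_exp.comp hexpneg.neg
  have hρc : Continuous ρ := hexpneg.mul hΛc
  have hgc : Continuous g := hf'c.mul hexpneg
  have hgsupp : HasCompactSupport g := (hsupp.deriv).mul_right
  have hgint : Integrable g := hgc.integrable_of_hasCompactSupport hgsupp
  have hρnonneg : ∀ x, 0 ≤ ρ x := fun x =>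
    mul_nonneg (Real.exp_pos _).le (Real.exp_pos _).le
  have hΛnonneg : ∀ x, 0 ≤ Λ x := fun x => (Real.exp_pos _).le
  obtain ⟨M, hM0, hM⟩ := hgsupp.exists_pos_le_norm
  have hg0 : ∀ u : ℝ, M ≤ u → g u = 0 := fun u hu =>
    hM u (hu.trans (le_abs_self u))
  set G : ℝ → ℝ := fun x => ∫ u in x..M, g u with hGdef
  have hG : ∀ x, HasDerivAt G (-(g x)) x := by
    intro x
    have h1 : HasDerivAt (fun y => ∫ u in M..y, g u) (g x) x :=
      intervalIntegral.integral_hasDerivAt_right (hgc.intervalIntegrable _ _)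
        (hgc.stronglyMeasurableAtFilter _ _) hgc.continuousAt
    have h2 : G = fun y => -∫ u in M..y, g u := by
      funext y
      show (∫ u in y..M, g u) = -∫ u in M..y, g u
      rw [intervalIntegral.integral_symm y M, neg_neg]
    rw [h2]
    exact h1.neg
  have hGtop : ∀ x, M ≤ x → G x = 0 := by
    intro x hx
    have heq : ∀ u ∈ uIcc x M, g u = (fun _ => (0 : ℝ)) u := by
      intro u hu
      rw [uIcc_of_ge hx] at hu
      exact hg0 u hu.1
    show (∫ u in x..M, g u) = 0
    rw [intervalIntegral.integral_congr heq]
    simp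
  have hIoi : ∀ x, ∫ u in Ioi x, g u = G x := by
    intro x
    rcases le_or_gt x M with h | h
    · show (∫ u in Ioi x, g u) = ∫ u in x..M, g u
      rw [intervalIntegral.integral_of_le h]
      refine setIntegral_eq_of_subset_of_forall_diff_eq_zero measurableSet_Ioi
        Ioc_subset_Ioi_self ?_
      intro u hu
      rcases hu with ⟨hu1, hu2⟩
      refine hg0 u ?_
      by_contra hcon
      push_neg at hcon
      exact hu2 ⟨hu1, hcon.le⟩
    · have h1 : ∫ u in Ioi x, g u = 0 :=
        setIntegral_eq_zero_of_forall_eq_zero fun u hu => hg0 u (h.le.trans (le_of_lt hu))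
      rw [h1, hGtop x h.le]
  have hCV : ∀ x, (∫ y in Ioi (0 : ℝ), g (x + y)) = ∫ u in Ioi x, g u := by
    intro x
    have hpre : (fun y => x + y) ⁻¹' Ioi x = Ioi (0 : ℝ) := by
      ext y; simp [lt_add_iff_pos_right]
    have := (measurePreserving_add_left (volume : Measure ℝ) x).setIntegral_preimage_emb
      (MeasurableEquiv.addLeft x).measurableEmbedding g (Ioi x)
    rw [hpre] at this
    exact this
  have hΛ : ∀ x, HasDerivAt Λ (ρ x) x := by
    intro x
    have h1 : HasDerivAt (fun y : ℝ => -Real.exp (-y)) (Real.exp (-x)) x := by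
      have h0 : HasDerivAt (fun y : ℝ => -y) (-1) x := (hasDerivAt_id x).neg
      have := (Real.hasDerivAt_exp (-x)).comp x h0
      have h3 := this.neg
      simp only [mul_neg, mul_one, neg_neg] at h3
      exact h3
    have h2 := (Real.hasDerivAt_exp (-Real.exp (-x))).comp x h1
    rw [mul_comm] at h2
    exact h2
  set H : ℝ → ℝ := fun x => Λ x * G x with hHdef
  have hH : ∀ x, HasDerivAt H (ρ x * (-(deriv f x) + G x)) x := by
    intro x
    have := (hΛ x).mul (hG x)
    refine this.congr_deriv ?_
    simp only [hgdef, hρdef, hΛdef]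
    ring
  -- integrability of ρ
  have hρint : Integrable ρ := by
    have h2 : IntegrableOn ρ (Iic (0 : ℝ)) := by
      refine (integrableOn_exp_Iic 0).mono' (hρc.aestronglyMeasurable.restrict) ?_
      rw [ae_restrict_iff' measurableSet_Iic]
      refine Eventually.of_forall fun x hx => ?_
      have hz : Real.exp (-x) ≥ -2 * x := by
        have h1 := Real.add_one_le_exp (-x / 2)
        have h2 : Real.exp (-x) = Real.exp (-x / 2) * Real.exp (-x / 2) := by
          rw [← Real.exp_add]; ring_nf
        nlinarith [Real.exp_pos (-x / 2), sq_nonneg (-x / 2 - 1)]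
      have hb : ρ x ≤ Real.exp x := by
        show Real.exp (-x) * Real.exp (-Real.exp (-x)) ≤ Real.exp x
        rw [← Real.exp_add]
        exact Real.exp_le_exp.mpr (by linarith)
      rw [Real.norm_eq_abs, abs_of_nonneg (hρnonneg x)]
      exact hb
    have h3 : IntegrableOn ρ (Ioi (0 : ℝ)) := by
      have hint : IntegrableOn (fun x : ℝ => Real.exp (-1 * x)) (Ioi (0 : ℝ)) :=
        exp_neg_integrableOn_Ioi 0 one_pos
      refine hint.mono' (hρc.aestronglyMeasurable.restrict) ?_
      refine Eventually.of_forall fun x => ?_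
      rw [Real.norm_eq_abs, abs_of_nonneg (hρnonneg x)]
      have h4 : Real.exp (-Real.exp (-x)) ≤ 1 :=
        Real.exp_le_one_iff.mpr (neg_nonpos.mpr (Real.exp_pos _).le)
      calc ρ x ≤ Real.exp (-x) * 1 :=
            mul_le_mul_of_nonneg_left h4 (Real.exp_pos _).le
        _ = Real.exp (-1 * x) := by rw [mul_one]; ring_nf
    rw [← integrableOn_univ, ← Iic_union_Ioi (a := (0 : ℝ))]
    exact h2.union h3
  set C : ℝ := ∫ u, ‖g u‖ with hCdef
  have hGbound : ∀ x, ‖G x‖ ≤ C := by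
    intro x
    rw [← hIoi x]
    calc ‖∫ u in Ioi x, g u‖ ≤ ∫ u in Ioi x, ‖g u‖ := norm_integral_le_integral_norm _
      _ ≤ ∫ u, ‖g u‖ :=
          setIntegral_le_integral hgint.norm (Eventually.of_forall fun u => norm_nonneg _)
  have hGcont : Continuous G := continuous_iff_continuousAt.2 fun x => (hG x).continuousAt
  -- integrability of the derivative of H
  have hφint : Integrable (fun x => ρ x * (-(deriv f x) + G x)) := by
    have i1 : Integrable (fun x => ρ x * deriv f x) := by
      refine Continuous.integrable_of_hasCompactSupport (hρc.mul hf'c) ?_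
      exact HasCompactSupport.mul_left hsupp.deriv
    have i2 : Integrable (fun x => ρ x * G x) := by
      refine (hρint.const_mul C).mono' ((hρc.mul hGcont).aestronglyMeasurable) ?_
      refine Eventually.of_forall fun x => ?_
      rw [Real.norm_eq_abs, abs_mul, abs_of_nonneg (hρnonneg x)]
      calc ρ x * |G x| ≤ ρ x * C := by
            refine mul_le_mul_of_nonneg_left ?_ (hρnonneg x)
            simpa [Real.norm_eq_abs] using hGbound x
        _ = C * ρ x := mul_comm _ _
    exact (i1.neg.add i2).congr
      (Eventually.of_forall fun x => by simp only [Pi.add_apply, Pi.neg_apply]; ring)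
  -- limits of H
  have hHtop : Tendsto H atTop (𝓝 0) := by
    have hev : H =ᶠ[atTop] fun _ => (0 : ℝ) :=
      (eventually_ge_atTop M).mono fun x hx => by
        simp [hHdef, hGtop x hx]
    exact Tendsto.congr' hev.symm tendsto_const_nhds
  have hΛ0 : Tendsto Λ atBot (𝓝 0) := by
    have h1 : Tendsto (fun x : ℝ => Real.exp (-x)) atBot atTop :=
      Real.tendsto_exp_atTop.comp tendsto_neg_atBot_atTop
    have h2 : Tendsto (fun x : ℝ => -Real.exp (-x)) atBot atBot :=
      tendsto_neg_atTop_atBot.comp h1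
    exact Real.tendsto_exp_atBot.comp h2
  have hHbot : Tendsto H atBot (𝓝 0) := by
    have hb : ∀ x, ‖H x‖ ≤ C * Λ x := by
      intro x
      show ‖Λ x * G x‖ ≤ C * Λ x
      rw [Real.norm_eq_abs, abs_mul, abs_of_nonneg (hΛnonneg _)]
      calc Λ x * |G x| ≤ Λ x * C := by
            refine mul_le_mul_of_nonneg_left ?_ (hΛnonneg x)
            simpa [Real.norm_eq_abs] using hGbound x
        _ = C * Λ x := mul_comm _ _
    have ht : Tendsto (fun x => C * Λ x) atBot (𝓝 0) := by
      simpa using hΛ0.const_mul C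
    exact squeeze_zero_norm hb ht
  -- rewrite the withDensity integral
  have hρmeas : Measurable fun x : ℝ =>
      (Real.exp (-x) * Real.exp (-Real.exp (-x))).toNNReal :=
    hρc.measurable.real_toNNReal
  have hkey : (∫ x, (-(deriv f x) + ∫ y in Ioi (0 : ℝ),
        deriv f (x + y) * Real.exp (-(x + y)))
        ∂(volume.withDensity
          (fun x : ℝ => ENNReal.ofReal (Real.exp (-x) * Real.exp (-Real.exp (-x))))))
      = ∫ x, ρ x * (-(deriv f x) + G x) := by
    rw [show (fun x : ℝ => ENNReal.ofReal (Real.exp (-x) * Real.exp (-Real.exp (-x))))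
        = (fun x : ℝ =>
          ((Real.exp (-x) * Real.exp (-Real.exp (-x))).toNNReal : ENNReal)) from rfl]
    rw [integral_withDensity_eq_integral_smul hρmeas]
    refine integral_congr_ae (Eventually.of_forall fun x => ?_)
    show (Real.exp (-x) * Real.exp (-Real.exp (-x))).toNNReal •
        (-(deriv f x) + ∫ y in Ioi (0 : ℝ), deriv f (x + y) * Real.exp (-(x + y)))
      = ρ x * (-(deriv f x) + G x)
    have h1 : (∫ y in Ioi (0 : ℝ), deriv f (x + y) * Real.exp (-(x + y))) = G x := by
      have h2 := hCV x
      rw [hIoi x] at h2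
      exact h2
    rw [h1, NNReal.smul_def, smul_eq_mul,
      Real.coe_toNNReal _ (hρnonneg x)]
  rw [hkey]
  have := integral_of_hasDerivAt_of_tendsto hH hφint hHbot hHtop
  simpa using this
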